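/- For nonempty compact sets A, B ⊆ ℝ, the Lebesgue measure of the Minkowski sum satisfies |A + B| ≥ |A| + |B|. -/

import Mathlib

open MeasureTheory Pointwise

theorem bml_one_dim (A B : Set ℝ) (hA : A.Nonempty) (hB : B.Nonempty)
    (hAc : IsCompact A) (hBc : IsCompact B) :
    volume (A + B) ≥ volume A + volume B := by
  set a := sSup A with ha'
  set b := sInf B with hb'
  have ha : a ∈ A := hAc.sSup_mem hA
  have hb : b ∈ B := hBc.sInf_mem hB
  set S : Set ℝ := A + {b} with hS
  set T : Set ℝ := {a} + B with hT
  have hST : S ∪ T ⊆ A + B := by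
    apply Set.union_subset
    · exact Set.add_subset_add_left (Set.singleton_subset_iff.2 hb)
    · exact Set.add_subset_add_right (Set.singleton_subset_iff.2 ha)
  have hinter : S ∩ T ⊆ {a + b} := by
    rintro x ⟨⟨u, hu, v, hv, rfl⟩, w, hw, z, hz, hwz⟩
    simp only [Set.mem_singleton_iff] at hv hw ⊢
    subst hv; subst hw
    have h1 : u ≤ a := le_csSup hAc.bddAbove hu
    have h2 : b ≤ z := csInf_le hBc.bddBelow hz
    simp only at hwz
    linarith
  have hTm : MeasurableSet T := (isCompact_singleton.add hBc).measurableSet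
  have hvS : volume S = volume A := by
    rw [hS, add_comm A, Set.singleton_add]
    show volume (b +ᵥ A) = volume A
    exact measure_vadd volume b A
  have hvT : volume T = volume B := by
    rw [hT, Set.singleton_add]
    show volume (a +ᵥ B) = volume B
    exact measure_vadd volume a B
  have h0 : volume (S ∩ T) = 0 :=
    le_antisymm ((measure_mono hinter).trans_eq (by simp)) zero_le
  calc volume A + volume B = volume S + volume T := by rw [hvS, hvT]
    _ = volume (S ∪ T) + volume (S ∩ T) := (measure_union_add_inter S hTm).symm
    _ = volume (S ∪ T) := by rw [h0, add_zero]
    _ ≤ volume (A + B) := measure_mono hST
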